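/- Let C be a cocomplete category admitting a set E of small-projective objects constituting a strong generator. Then C is equivalent to the presheaf category [Ɛ^op, Set], where Ɛ is the full subcategory of C on the objects of E, via the restricted Yoneda functor X ↦ C(−, X)|_{Ɛ}. -/

import Mathlib

open CategoryTheory Limits Opposite

universe v u

namespace CategoryTheory.Presheaf

/-- The restricted Yoneda functor `X ↦ C(A -, X)`. -/
abbrev restrictedYoneda {S : Type*} [Category.{v} S] {C : Type u} [Category.{v} C]
    (A : S ⥤ C) : C ⥤ Sᵒᵖ ⥤ Type v :=
  yoneda ⋙ (Functor.whiskeringLeft _ _ _).obj A.op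

end CategoryTheory.Presheaf

namespace KellyAux

variable {S : Type v} [SmallCategory S] {C : Type u} [Category.{v} C]
  [HasColimitsOfSize.{v, v} C] (A : S ⥤ C)

/-- Formula for the unit of the adjunction `L ⊣ restrictedULiftYoneda A`. -/
lemma unit_app_app (Q : Sᵒᵖ ⥤ Type v) (Z : Sᵒᵖ) (x : Q.obj Z) :
    ((Presheaf.uliftYonedaAdjunction.{0, v, v, v, u} (uliftYoneda.{v}.leftKanExtension A)
        (uliftYoneda.{v}.leftKanExtensionUnit A)).unit.app Q).app Z x =
      ULift.up ((uliftYoneda.{v}.leftKanExtensionUnit A).app Z.unop ≫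
        (uliftYoneda.{v}.leftKanExtension A).map (uliftYonedaEquiv.symm x)) := by
  simp
  rfl

lemma isIso_unit_app_yoneda [A.Full] [A.Faithful] (P : S) :
    IsIso ((Presheaf.uliftYonedaAdjunction.{0, v, v, v, u} (uliftYoneda.{v}.leftKanExtension A)
        (uliftYoneda.{v}.leftKanExtensionUnit A)).unit.app (uliftYoneda.{v}.obj P)) := by
  have h : ∀ (Z : Sᵒᵖ), IsIso (((Presheaf.uliftYonedaAdjunction.{0, v, v, v, u}
      (uliftYoneda.{v}.leftKanExtension A)
      (uliftYoneda.{v}.leftKanExtensionUnit A)).unit.app (uliftYoneda.{v}.obj P)).app Z) := by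
    intro Z
    rw [isIso_iff_bijective]
    have hfun : ⇑(((Presheaf.uliftYonedaAdjunction.{0, v, v, v, u}
        (uliftYoneda.{v}.leftKanExtension A)
        (uliftYoneda.{v}.leftKanExtensionUnit A)).unit.app (uliftYoneda.{v}.obj P)).app Z) =
        ULift.up ∘ (fun g : A.obj Z.unop ⟶ A.obj P =>
          g ≫ (uliftYoneda.{v}.leftKanExtensionUnit A).app P) ∘
          (fun (x : Z.unop ⟶ P) => A.map x) ∘ ULift.down := by
      funext x
      rw [unit_app_app]
      have hx : uliftYonedaEquiv.symm x = uliftYoneda.{v}.map x.down := by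
        rw [Equiv.symm_apply_eq]
        exact (uliftYonedaEquiv_uliftYoneda_map x.down).symm
      rw [hx]
      simp only [Function.comp_apply]
      congr 1
      exact ((uliftYoneda.{v}.leftKanExtensionUnit A).naturality x.down).symm
    rw [hfun]
    have h1 : Function.Bijective (fun (x : Z.unop ⟶ P) => A.map x) :=
      (Functor.FullyFaithful.ofFullyFaithful A).homEquiv.bijective
    have h2 : Function.Bijective (fun (g : A.obj Z.unop ⟶ A.obj P) =>
        g ≫ (uliftYoneda.{v}.leftKanExtensionUnit A).app P) :=
      (Iso.homToEquiv (asIso ((uliftYoneda.{v}.leftKanExtensionUnit A).app P))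
        (Z := A.obj Z.unop)).bijective
    have h0 : Function.Bijective (ULift.down : ULift.{v} (Z.unop ⟶ P) → _) :=
      Equiv.ulift.bijective
    exact Equiv.ulift.symm.bijective.comp (h2.comp (h1.comp h0))
  exact NatIso.isIso_of_isIso_app _

/-- A natural transformation between colimit-preserving functors out of a presheaf
category which is an isomorphism on representables is an isomorphism. -/
lemma isIso_of_isIso_app_yoneda {D : Type u} [Category.{v} D]
    {F G : (Sᵒᵖ ⥤ Type v) ⥤ D}
    [PreservesColimitsOfSize.{v, v} F] [PreservesColimitsOfSize.{v, v} G]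
    (τ : F ⟶ G) (h : ∀ (P : S), IsIso (τ.app (uliftYoneda.{v}.obj P))) : IsIso τ := by
  have : ∀ Q, IsIso (τ.app Q) := by
    intro Q
    let h₁ := isColimitOfPreserves F (Presheaf.colimitOfRepresentable.{v, v, v} Q)
    let h₂ := isColimitOfPreserves G (Presheaf.colimitOfRepresentable.{v, v, v} Q)
    haveI : ∀ x, IsIso ((Functor.whiskerLeft
        (Presheaf.functorToRepresentables.{v} Q) τ).app x) :=
      fun x => h _
    haveI : IsIso (Functor.whiskerLeft (Presheaf.functorToRepresentables.{v} Q) τ) :=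
      NatIso.isIso_of_isIso_app _
    have eq : τ.app Q = (IsColimit.coconePointsIsoOfNatIso h₁ h₂
        (asIso (Functor.whiskerLeft (Presheaf.functorToRepresentables.{v} Q) τ))).hom := by
      apply h₁.hom_ext
      intro j
      exact (τ.naturality _).trans
        (IsColimit.comp_coconePointsIsoOfNatIso_hom h₁ h₂
          (asIso (Functor.whiskerLeft (Presheaf.functorToRepresentables.{v} Q) τ)) j).symm
    rw [eq]
    exact Iso.isIso_hom _
  exact NatIso.isIso_of_isIso_app τ

theorem restrictedYoneda_isEquivalence [A.Full] [A.Faithful]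
    (hproj : ∀ P : S,
      Nonempty (PreservesColimitsOfSize.{v, v} (coyoneda.obj (op (A.obj P)))))
    (hgen : ∀ {X Y : C} (F : X ⟶ Y),
      (∀ P : S, Function.Bijective fun g : A.obj P ⟶ X => g ≫ F) → IsIso F) :
    (Presheaf.restrictedYoneda A).IsEquivalence := by
  haveI hR0 : PreservesColimitsOfSize.{v, v} (Presheaf.restrictedYoneda A) := by
    apply preservesColimits_of_evaluation
    intro Z
    haveI := (hproj Z.unop).some
    exact preservesColimits_of_natIso
      (F := coyoneda.obj (op (A.obj Z.unop))) (Iso.refl _)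
  let L := uliftYoneda.{v}.leftKanExtension A
  let α := uliftYoneda.{v}.leftKanExtensionUnit A
  let adj := Presheaf.uliftYonedaAdjunction.{0, v, v, v, u} L α
  let isoR : Presheaf.restrictedULiftYoneda.{v} A ≅ Presheaf.restrictedYoneda A :=
    Functor.isoWhiskerRight (uliftYonedaIsoYoneda.{v, v}) _
  haveI hR : PreservesColimitsOfSize.{v, v} (Presheaf.restrictedULiftYoneda.{v} A) :=
    preservesColimits_of_natIso isoR.symm
  haveI hLP : PreservesColimitsOfSize.{v, v} L :=
    Presheaf.preservesColimitsOfSize_leftKanExtension.{0, v, v, v, v, u, v} A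
  haveI : PreservesColimitsOfSize.{v, v} (L ⋙ Presheaf.restrictedULiftYoneda.{v} A) :=
    comp_preservesColimits _ _
  haveI hunit : IsIso adj.unit :=
    isIso_of_isIso_app_yoneda adj.unit (fun P => isIso_unit_app_yoneda A P)
  haveI hunitapp : ∀ Q, IsIso (adj.unit.app Q) := fun Q => inferInstance
  haveI hcounit : ∀ X, IsIso (adj.counit.app X) := by
    intro X
    have hRc : IsIso ((Presheaf.restrictedULiftYoneda.{v} A).map (adj.counit.app X)) := by
      have htri := adj.right_triangle_components X
      haveI : IsIso (adj.unit.app ((Presheaf.restrictedULiftYoneda.{v} A).obj X) ≫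
          (Presheaf.restrictedULiftYoneda.{v} A).map (adj.counit.app X)) := by
        rw [htri]; exact IsIso.id _
      exact IsIso.of_isIso_comp_left
        (adj.unit.app ((Presheaf.restrictedULiftYoneda.{v} A).obj X)) _
    apply hgen
    intro P
    have h2 : IsIso (((Presheaf.restrictedULiftYoneda.{v} A).map (adj.counit.app X)).app (op P)) :=
      inferInstance
    have hb := (isIso_iff_bijective _).1 h2
    exact Equiv.ulift.bijective.comp (hb.comp Equiv.ulift.symm.bijective)
  haveI : (Presheaf.restrictedULiftYoneda.{v} A).IsEquivalence :=
    adj.toEquivalence.isEquivalence_inverse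
  exact Functor.isEquivalence_of_iso isoR

end KellyAux

/-- Kelly, *Basic concepts of enriched category theory*, Theorem 5.26,
for `V = Set`.  Let `C` be a cocomplete category admitting a set `E` of small-projective
objects (objects `P` such that `C(P, −)` preserves small colimits) constituting a strong
generator (a morphism `F` is an isomorphism whenever `C(P, F)` is a bijection for all
`P ∈ E`).  Then `C` is equivalent to the presheaf category `[Ɛᵒᵖ, Set]`, where `Ɛ` is the
full subcategory of `C` on the objects of `E`, via the restricted Yoneda functor
`X ↦ C(−, X)|_Ɛ`. -/
theorem kelly_presheaf_equivalence {C : Type u} [Category.{v} C]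
    [HasColimitsOfSize.{v, v} C] (E : Set C) [Small.{v} E]
    (hproj : ∀ P ∈ E,
      Nonempty (PreservesColimitsOfSize.{v, v} (coyoneda.obj (Opposite.op P))))
    (hgen : ∀ {X Y : C} (F : X ⟶ Y),
      (∀ P ∈ E, Function.Bijective fun g : P ⟶ X => g ≫ F) → IsIso F) :
    (yoneda ⋙ (Functor.whiskeringLeft (ObjectProperty.FullSubcategory fun X => X ∈ E)ᵒᵖ Cᵒᵖ (Type v)).obj
        (ObjectProperty.ι fun X => X ∈ E).op).IsEquivalence := by
  haveI : Small.{v} (ObjectProperty.FullSubcategory fun X => X ∈ E) :=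
    small_map (⟨fun X => (⟨X.obj, X.property⟩ : E), fun x => ⟨x.1, x.2⟩,
      fun _ => rfl, fun _ => rfl⟩ : (ObjectProperty.FullSubcategory fun X => X ∈ E) ≃ E)
  haveI : EssentiallySmall.{v} (ObjectProperty.FullSubcategory fun X => X ∈ E) :=
    essentiallySmall_of_small_of_locallySmall _
  let e := equivSmallModel.{v} (ObjectProperty.FullSubcategory fun X => X ∈ E)
  let ι := ObjectProperty.ι fun X => X ∈ E
  let A : SmallModel.{v} (ObjectProperty.FullSubcategory fun X => X ∈ E) ⥤ C := e.inverse ⋙ ι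
  have hproj' : ∀ P, Nonempty
      (PreservesColimitsOfSize.{v, v} (coyoneda.obj (Opposite.op (A.obj P)))) :=
    fun P => hproj _ (e.inverse.obj P).property
  have hgen' : ∀ {X Y : C} (F : X ⟶ Y),
      (∀ P, Function.Bijective fun g : A.obj P ⟶ X => g ≫ F) → IsIso F := by
    intro X Y F h
    apply hgen
    intro P hP
    let j : A.obj (e.functor.obj ⟨P, hP⟩) ≅ P :=
      ι.mapIso (e.unitIso.symm.app ⟨P, hP⟩)
    have hb := h (e.functor.obj ⟨P, hP⟩)
    have key : (fun g : P ⟶ X => g ≫ F) =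
        (fun g : A.obj (e.functor.obj ⟨P, hP⟩) ⟶ Y => j.inv ≫ g) ∘
          ((fun g : A.obj (e.functor.obj ⟨P, hP⟩) ⟶ X => g ≫ F) ∘
            (fun g : P ⟶ X => j.hom ≫ g)) := by
      funext g
      simp
    rw [key]
    have b1 : Function.Bijective (fun g : P ⟶ X => j.hom ≫ g) :=
      (⟨fun g => j.hom ≫ g, fun g => j.inv ≫ g,
        fun g => by simp, fun g => by simp⟩ :
          (P ⟶ X) ≃ (A.obj (e.functor.obj ⟨P, hP⟩) ⟶ X)).bijective
    have b2 : Function.Bijective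
        (fun g : A.obj (e.functor.obj ⟨P, hP⟩) ⟶ Y => j.inv ≫ g) :=
      (⟨fun g => j.inv ≫ g, fun g => j.hom ≫ g,
        fun g => by simp, fun g => by simp⟩ :
          (A.obj (e.functor.obj ⟨P, hP⟩) ⟶ Y) ≃ (P ⟶ Y)).bijective
    exact b2.comp (hb.comp b1)
  haveI hAeq : (Presheaf.restrictedYoneda A).IsEquivalence :=
    KellyAux.restrictedYoneda_isEquivalence A hproj' hgen'
  let W := (Functor.whiskeringLeft (SmallModel.{v} (ObjectProperty.FullSubcategory fun X => X ∈ E))ᵒᵖ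
      (ObjectProperty.FullSubcategory fun X => X ∈ E)ᵒᵖ (Type v)).obj e.inverse.op
  haveI hW : W.IsEquivalence := by
    haveI : (e.inverse.op).IsEquivalence := inferInstance
    infer_instance
  haveI : (Presheaf.restrictedYoneda ι ⋙ W).IsEquivalence :=
    Functor.isEquivalence_of_iso
      (F := Presheaf.restrictedYoneda A)
      (NatIso.ofComponents (fun X => Iso.refl _) (by intros; aesop_cat))
  exact Functor.isEquivalence_of_comp_right (Presheaf.restrictedYoneda ι) W
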